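/- Restriction preserves regret bound: for any policy ξ on the augmented MDP with restriction ξ̲ to the original MDP, the regret of ξ̲ in the original MDP is at most the regret of ξ in the augmented MDP: V*(d₀) − V^{ξ̲}(d₀) ≤ V̄*(d₀) − V̄^{ξ}(d₀). -/

import Mathlib

open scoped ENNReal
open Classical

/-- Expectation of a real-valued function under a probability mass function. -/
noncomputable def pexp {σ : Type*} (p : PMF σ) (φ : σ → ℝ) : ℝ :=
  ∑' s, (p s).toReal * φ s

/-- Transition kernel of the action-augmented MDP: states `Option X` (with `none` the
absorbing state `s⁺`), actions `Option A` (with `none` the fictitious action `a⁺`).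
Taking `a⁺` always transitions to `s⁺`; real actions follow the original dynamics;
`s⁺` is absorbing. -/
noncomputable def augP {X A : Type*} (P : X → A → PMF X) :
    Option X → Option A → PMF (Option X)
  | some x, some a => (P x a).map some
  | _, _ => PMF.pure none

/-- Reward of the action-augmented MDP: reward `1` exactly when taking the fictitious
action `a⁺` at a goal state; all other rewards are `0`. -/
noncomputable def augR {X A : Type*} (G : Set X) : Option X → Option A → ℝ
  | some x, none => if x ∈ G then 1 else 0
  | _, _ => 0

/-- Extension `π̄` of a policy `π` to the augmented MDP: play the fictitious action `a⁺`
exactly on goal states, otherwise follow `π`. -/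
noncomputable def extPi {X A : Type*} (G : Set X) (π : X → PMF A) :
    Option X → PMF (Option A)
  | some x => if x ∈ G then PMF.pure none else (π x).map some
  | none => PMF.pure none

section Helpers
variable {σ : Type*} [Fintype σ]

lemma pexp_eq_sum (p : PMF σ) (φ : σ → ℝ) :
    pexp p φ = ∑ s, (p s).toReal * φ s := tsum_fintype _

lemma pmf_sum_toReal (p : PMF σ) : ∑ s, (p s).toReal = 1 := by
  have h : ∑ s, p s = 1 := by
    exact (tsum_fintype (fun s => p s)).symm.trans p.tsum_coe
  have := ENNReal.toReal_sum (s := (Finset.univ : Finset σ)) (f := fun s => p s)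
    (fun s _ => p.apply_ne_top s)
  rw [h] at this
  simpa using this.symm

lemma pexp_le (p : PMF σ) {φ : σ → ℝ} {C : ℝ} (h : ∀ s, φ s ≤ C) : pexp p φ ≤ C := by
  rw [pexp_eq_sum]
  calc ∑ s, (p s).toReal * φ s ≤ ∑ s, (p s).toReal * C :=
        Finset.sum_le_sum fun s _ => mul_le_mul_of_nonneg_left (h s) ENNReal.toReal_nonneg
    _ = C := by rw [← Finset.sum_mul, pmf_sum_toReal, one_mul]

lemma le_pexp (p : PMF σ) {φ : σ → ℝ} {C : ℝ} (h : ∀ s, C ≤ φ s) : C ≤ pexp p φ := by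
  rw [pexp_eq_sum]
  calc C = ∑ s, (p s).toReal * C := by rw [← Finset.sum_mul, pmf_sum_toReal, one_mul]
    _ ≤ ∑ s, (p s).toReal * φ s :=
        Finset.sum_le_sum fun s _ => mul_le_mul_of_nonneg_left (h s) ENNReal.toReal_nonneg

lemma pexp_mono (p : PMF σ) {φ ψ : σ → ℝ} (h : ∀ s, φ s ≤ ψ s) : pexp p φ ≤ pexp p ψ := by
  rw [pexp_eq_sum, pexp_eq_sum]
  exact Finset.sum_le_sum fun s _ => mul_le_mul_of_nonneg_left (h s) ENNReal.toReal_nonneg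

lemma abs_pexp_le (p : PMF σ) {φ : σ → ℝ} {C : ℝ} (h : ∀ s, |φ s| ≤ C) :
    |pexp p φ| ≤ C := by
  rw [pexp_eq_sum]
  calc |∑ s, (p s).toReal * φ s| ≤ ∑ s, |(p s).toReal * φ s| := Finset.abs_sum_le_sum_abs _ _
    _ ≤ ∑ s, (p s).toReal * C := Finset.sum_le_sum fun s _ => by
        rw [abs_mul, abs_of_nonneg ENNReal.toReal_nonneg]
        exact mul_le_mul_of_nonneg_left (h s) ENNReal.toReal_nonneg
    _ = C := by rw [← Finset.sum_mul, pmf_sum_toReal, one_mul]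

lemma pexp_const (p : PMF σ) (c : ℝ) : pexp p (fun _ => c) = c :=
  le_antisymm (pexp_le p fun _ => le_rfl) (le_pexp p fun _ => le_rfl)

lemma pexp_add_const (p : PMF σ) (φ : σ → ℝ) (c : ℝ) :
    pexp p (fun s => φ s + c) = pexp p φ + c := by
  rw [pexp_eq_sum, pexp_eq_sum]
  simp only [mul_add, Finset.sum_add_distrib]
  rw [← Finset.sum_mul, pmf_sum_toReal, one_mul]

lemma pexp_neg (p : PMF σ) (φ : σ → ℝ) : pexp p (fun s => -φ s) = -pexp p φ := by
  rw [pexp_eq_sum, pexp_eq_sum, ← Finset.sum_neg_distrib]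
  exact Finset.sum_congr rfl fun s _ => by ring

end Helpers

lemma pexp_pure {σ : Type*} (s : σ) (φ : σ → ℝ) : pexp (PMF.pure s) φ = φ s := by
  unfold pexp
  rw [tsum_eq_single s]
  · simp [PMF.pure_apply]
  · intro t ht; simp [PMF.pure_apply, ht]

lemma pexp_map_some {X : Type*} [Fintype X] (p : PMF X) (φ : Option X → ℝ) :
    pexp (p.map some) φ = pexp p (fun x => φ (some x)) := by
  rw [pexp_eq_sum, pexp_eq_sum, Fintype.sum_option]
  have hnone : (p.map some) none = 0 := by
    rw [PMF.map_apply]; simp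
  have hsome : ∀ x, (p.map some) (some x) = p x := fun x => by
    rw [PMF.map_apply, tsum_eq_single x] <;> simp +contextual [eq_comm]
  simp [hnone, hsome]

lemma le_ciSup_fin {ι : Type*} [Finite ι] (f : ι → ℝ) (i : ι) : f i ≤ ⨆ j, f j :=
  le_ciSup (Set.Finite.bddAbove (Set.finite_range f)) i

lemma shrink_nonpos {γ M : ℝ} (hγ1 : γ < 1) (h : M ≤ γ * max 0 M) : M ≤ 0 := by
  rcases le_or_gt M 0 with h' | h'
  · exact h'
  · rw [max_eq_right h'.le] at h; nlinarith

lemma le_one_of_le_max {γ S : ℝ} (hγ1 : γ < 1) (h : S ≤ max 1 (γ * S)) : S ≤ 1 := by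
  rcases le_or_gt S 1 with h' | h'
  · exact h'
  · rcases max_cases 1 (γ * S) with ⟨he, _⟩ | ⟨he, _⟩ <;> rw [he] at h <;> nlinarith


/-- Restriction preserves the regret bound: for any policy `ξ` on the
augmented MDP with restriction `ξ̲ = ξr` to the original MDP (redistributing the mass on
the fictitious action uniformly over real actions), the regret of `ξ̲` in the original
goal-oriented MDP is at most the regret of `ξ` in the augmented MDP:
`V*(d₀) − V^{ξ̲}(d₀) ≤ V̄*(d₀) − V̄^{ξ}(d₀)`. Optimal values and policy values are
characterized by their Bellman equations. -/
theorem stmt19 {X A : Type*} [Fintype X] [Fintype A] [Nonempty A]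
    (G : Set X) (P : X → A → PMF X) (d0 : PMF X)
    (γ : ℝ) (hγ0 : 0 ≤ γ) (hγ1 : γ < 1)
    (ξ : Option X → PMF (Option A)) (ξr : X → PMF A)
    (hres : ∀ x a, ξr x a =
      ξ (some x) (some a) + ξ (some x) none / (Fintype.card A : ℝ≥0∞))
    (Qstar : X → A → ℝ)
    (hQstar : ∀ x a, Qstar x a =
      if x ∈ G then 1 else γ * pexp (P x a) (fun x' => ⨆ a' : A, Qstar x' a'))
    (Qbstar : Option X → Option A → ℝ)
    (hQbstar : ∀ ox oa, Qbstar ox oa =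
      augR G ox oa + γ * pexp (augP P ox oa) (fun ox' => ⨆ oa' : Option A, Qbstar ox' oa'))
    (Qr : X → A → ℝ)
    (hQr : ∀ x a, Qr x a =
      if x ∈ G then 1 else γ * pexp (P x a) (fun x' => pexp (ξr x') (Qr x')))
    (Qξ : Option X → Option A → ℝ)
    (hQξ : ∀ ox oa, Qξ ox oa =
      augR G ox oa + γ * pexp (augP P ox oa) (fun ox' => pexp (ξ ox') (Qξ ox'))) :
    pexp d0 (fun x => ⨆ a : A, Qstar x a) - pexp d0 (fun x => pexp (ξr x) (Qr x))
      ≤ pexp (d0.map some) (fun ox => ⨆ oa : Option A, Qbstar ox oa)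
        - pexp (d0.map some) (fun ox => pexp (ξ ox) (Qξ ox)) := by
  haveI hXne : Nonempty X := ⟨d0.support_nonempty.choose⟩
  -- abbreviations
  set Vs : X → ℝ := fun x => ⨆ a : A, Qstar x a with hVs
  set Vb : Option X → ℝ := fun ox => ⨆ oa : Option A, Qbstar ox oa with hVb
  set Vr : X → ℝ := fun x => pexp (ξr x) (Qr x) with hVr
  set Vξ : Option X → ℝ := fun ox => pexp (ξ ox) (Qξ ox) with hVξ
  -- definitional reductions of augP / augR
  have hPss : ∀ (x : X) (a : A), augP P (some x) (some a) = (P x a).map some := fun _ _ => rfl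
  have hPsn : ∀ (x : X), augP P (some x) (none : Option A) = PMF.pure none := fun _ => rfl
  have hPn : ∀ oa : Option A, augP P none oa = PMF.pure none := fun oa => by cases oa <;> rfl
  have hRss : ∀ (x : X) (a : A), augR G (some x) (some a) = 0 := fun _ _ => rfl
  have hRsn : ∀ x : X, augR G (some x) (none : Option A) = if x ∈ G then 1 else 0 :=
    fun _ => rfl
  have hRn : ∀ oa : Option A, augR G none oa = 0 := fun oa => by cases oa <;> rfl
  have hcancel : ∀ c : ℝ, c = γ * c → c = 0 := by
    intro c hc
    have h1 : (1 - γ) * c = 0 := by linarith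
    rcases mul_eq_zero.mp h1 with h | h
    · nlinarith
    · exact h
  -- the absorbing state has value 0 (optimal and under ξ)
  have hQbn : ∀ oa : Option A, Qbstar none oa = γ * Vb none := fun oa => by
    rw [hQbstar, hRn, hPn, pexp_pure]; ring
  have hVbnone : Vb none = 0 := by
    apply hcancel
    have : Vb none = ⨆ _ : Option A, γ * Vb none := by
      show (⨆ oa : Option A, Qbstar none oa) = _
      exact congrArg iSup (funext hQbn)
    rwa [ciSup_const] at this
  have hQξn : ∀ oa : Option A, Qξ none oa = γ * Vξ none := fun oa => by
    rw [hQξ, hRn, hPn, pexp_pure]; ring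
  have hVξnone : Vξ none = 0 := by
    apply hcancel
    have h1 : Vξ none = pexp (ξ none) (fun _ => γ * Vξ none) := by
      show pexp (ξ none) (Qξ none) = _
      exact congrArg (pexp (ξ none)) (funext hQξn)
    rwa [pexp_const] at h1
  -- component formulas
  have hQb_sn : ∀ x : X, Qbstar (some x) (none : Option A) = if x ∈ G then 1 else 0 :=
    fun x => by rw [hQbstar, hRsn, hPsn, pexp_pure, hVbnone]; ring
  have hQb_ss : ∀ (x : X) (a : A),
      Qbstar (some x) (some a) = γ * pexp (P x a) (fun x' => Vb (some x')) := fun x a => by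
    rw [hQbstar, hRss, hPss, pexp_map_some]; ring
  have hQb_n : ∀ oa : Option A, Qbstar none oa = 0 := fun oa => by
    rw [hQbn oa, hVbnone]; ring
  have hQξ_sn : ∀ x : X, Qξ (some x) (none : Option A) = if x ∈ G then 1 else 0 :=
    fun x => by rw [hQξ, hRsn, hPsn, pexp_pure, hVξnone]; ring
  have hQξ_ss : ∀ (x : X) (a : A),
      Qξ (some x) (some a) = γ * pexp (P x a) (fun x' => Vξ (some x')) := fun x a => by
    rw [hQξ, hRss, hPss, pexp_map_some]; ring
  have hQξ_n : ∀ oa : Option A, Qξ none oa = 0 := fun oa => by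
    rw [hQξn oa, hVξnone]; ring
  -- |Qstar| ≤ 1 and |Vs| ≤ 1
  have habsQs : ∀ {S : ℝ} (hS : ∀ x a, |Qstar x a| ≤ S) (x : X), |Vs x| ≤ S := by
    intro S hS x
    rw [abs_le]
    constructor
    · calc -S ≤ Qstar x (Classical.arbitrary A) := neg_le_of_abs_le (hS x _)
        _ ≤ Vs x := le_ciSup_fin _ _
    · exact ciSup_le fun a => le_of_abs_le (hS x a)
  have hQs1 : ∀ x a, |Qstar x a| ≤ 1 := by
    obtain ⟨p0, _, hp0⟩ := Finset.univ.exists_max_image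
      (fun p : X × A => |Qstar p.1 p.2|) Finset.univ_nonempty
    have hS : ∀ x a, |Qstar x a| ≤ |Qstar p0.1 p0.2| := fun x a =>
      hp0 (x, a) (Finset.mem_univ _)
    have hSm : |Qstar p0.1 p0.2| ≤ max 1 (γ * |Qstar p0.1 p0.2|) := by
      nth_rewrite 1 [hQstar p0.1 p0.2]
      by_cases hg : p0.1 ∈ G
      · rw [if_pos hg, abs_one]; exact le_max_left _ _
      · rw [if_neg hg, abs_mul, abs_of_nonneg hγ0]
        have hp : |pexp (P p0.1 p0.2) Vs| ≤ |Qstar p0.1 p0.2| :=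
          abs_pexp_le _ fun x' => habsQs hS x'
        exact le_max_of_le_right (mul_le_mul_of_nonneg_left hp hγ0)
    intro x a
    exact (hS x a).trans (le_one_of_le_max hγ1 hSm)
  have hVs1 : ∀ x, |Vs x| ≤ 1 := habsQs hQs1
  -- |Qξ| ≤ 1 and |Vξ| ≤ 1
  have habsQξ : ∀ {S : ℝ} (hS : ∀ ox oa, |Qξ ox oa| ≤ S) (ox : Option X), |Vξ ox| ≤ S := by
    intro S hS ox
    exact abs_pexp_le _ fun oa => hS ox oa
  have hQξ1 : ∀ ox oa, |Qξ ox oa| ≤ 1 := by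
    obtain ⟨p0, _, hp0⟩ := Finset.univ.exists_max_image
      (fun p : Option X × Option A => |Qξ p.1 p.2|) Finset.univ_nonempty
    obtain ⟨ox0, oa0⟩ := p0
    have hS : ∀ ox oa, |Qξ ox oa| ≤ |Qξ ox0 oa0| := fun ox oa =>
      hp0 (ox, oa) (Finset.mem_univ _)
    have hSm : |Qξ ox0 oa0| ≤ max 1 (γ * |Qξ ox0 oa0|) := by
      nth_rewrite 1 3 [show Qξ ox0 oa0 = Qξ ox0 oa0 from rfl]
      rcases ox0 with _ | x
      · rw [hQξ_n]; simp
      · rcases oa0 with _ | a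
        · rw [hQξ_sn]
          rcases le_max_left 1 (γ * |Qξ (some x) (none : Option A)|) with h
          by_cases hg : x ∈ G
          · rw [if_pos hg, abs_one]; exact le_max_left _ _
          · rw [if_neg hg, abs_zero]
            exact le_max_of_le_left zero_le_one
        · nth_rewrite 1 [hQξ_ss]
          rw [abs_mul, abs_of_nonneg hγ0]
          have hp : |pexp (P x a) (fun x' => Vξ (some x'))| ≤ |Qξ (some x) (some a)| :=
            abs_pexp_le _ fun x' => habsQξ hS (some x')
          exact le_max_of_le_right (mul_le_mul_of_nonneg_left hp hγ0)
    intro ox oa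
    exact (hS ox oa).trans (le_one_of_le_max hγ1 hSm)
  have hVξ1 : ∀ ox, |Vξ ox| ≤ 1 := habsQξ hQξ1
  -- nonnegativity of Qstar
  have hQs0 : ∀ x a, 0 ≤ Qstar x a := by
    obtain ⟨p0, _, hp0⟩ := Finset.univ.exists_max_image
      (fun p : X × A => -Qstar p.1 p.2) Finset.univ_nonempty
    have hN : ∀ x a, -Qstar x a ≤ -Qstar p0.1 p0.2 := fun x a => hp0 (x, a) (Finset.mem_univ _)
    have hNle : -Qstar p0.1 p0.2 ≤ γ * max 0 (-Qstar p0.1 p0.2) := by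
      nth_rewrite 1 [hQstar p0.1 p0.2]
      by_cases hg : p0.1 ∈ G
      · rw [if_pos hg]
        have : (0:ℝ) ≤ γ * max 0 (-Qstar p0.1 p0.2) :=
          mul_nonneg hγ0 (le_max_left _ _)
        linarith
      · rw [if_neg hg, ← mul_neg, ← pexp_neg]
        refine mul_le_mul_of_nonneg_left (pexp_le _ fun x' => ?_) hγ0
        calc -Vs x' ≤ -Qstar x' (Classical.arbitrary A) :=
              neg_le_neg (le_ciSup_fin _ _)
          _ ≤ -Qstar p0.1 p0.2 := hN x' _
          _ ≤ max 0 (-Qstar p0.1 p0.2) := le_max_right _ _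
    have : -Qstar p0.1 p0.2 ≤ 0 := shrink_nonpos hγ1 hNle
    intro x a
    have := (hN x a).trans this
    linarith
  have hVs0 : ∀ x, 0 ≤ Vs x := fun x =>
    le_trans (hQs0 x (Classical.arbitrary A)) (le_ciSup_fin _ _)
  -- nonnegativity of Qr
  have hQr0 : ∀ x a, 0 ≤ Qr x a := by
    obtain ⟨p0, _, hp0⟩ := Finset.univ.exists_max_image
      (fun p : X × A => -Qr p.1 p.2) Finset.univ_nonempty
    have hN : ∀ x a, -Qr x a ≤ -Qr p0.1 p0.2 := fun x a => hp0 (x, a) (Finset.mem_univ _)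
    have hNle : -Qr p0.1 p0.2 ≤ γ * max 0 (-Qr p0.1 p0.2) := by
      nth_rewrite 1 [hQr p0.1 p0.2]
      by_cases hg : p0.1 ∈ G
      · rw [if_pos hg]
        have : (0:ℝ) ≤ γ * max 0 (-Qr p0.1 p0.2) := mul_nonneg hγ0 (le_max_left _ _)
        linarith
      · rw [if_neg hg, ← mul_neg, ← pexp_neg]
        refine mul_le_mul_of_nonneg_left (pexp_le _ fun x' => ?_) hγ0
        have : -Vr x' ≤ -Qr p0.1 p0.2 := by
          show -pexp (ξr x') (Qr x') ≤ _
          rw [← pexp_neg]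
          exact pexp_le _ fun a => hN x' a
        exact this.trans (le_max_right _ _)
    have hfin : -Qr p0.1 p0.2 ≤ 0 := shrink_nonpos hγ1 hNle
    intro x a
    have := (hN x a).trans hfin
    linarith
  have hVr0 : ∀ x, 0 ≤ Vr x := fun x => le_pexp _ fun a => hQr0 x a
  -- Fact A : Vb (some x) = Vs x
  have factA : ∀ x, Vb (some x) = Vs x := by
    obtain ⟨x0, _, hx0⟩ := Finset.univ.exists_max_image
      (fun x : X => |Vb (some x) - Vs x|) Finset.univ_nonempty
    set M := |Vb (some x0) - Vs x0| with hM
    have hMnn : 0 ≤ M := abs_nonneg _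
    have hMb : ∀ x, |Vb (some x) - Vs x| ≤ M := fun x => hx0 x (Finset.mem_univ _)
    have hup : ∀ x, Vb (some x) ≤ Vs x + M := fun x => by
      have := (abs_le.mp (hMb x)).2; linarith
    have hlo : ∀ x, Vs x ≤ Vb (some x) + M := fun x => by
      have := (abs_le.mp (hMb x)).1; linarith
    have key : M ≤ γ * M := by
      have habs : |Vb (some x0) - Vs x0| ≤ γ * M := ?_
      · calc M = |Vb (some x0) - Vs x0| := hM
          _ ≤ γ * M := habs
      by_cases hg : x0 ∈ G
      · -- Vs x0 = 1, 1 ≤ Vb (some x0) ≤ 1 + γ M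
        have hVsx : Vs x0 = 1 := by
          have h : (fun a : A => Qstar x0 a) = fun _ => (1:ℝ) := by
            funext a; rw [hQstar, if_pos hg]
          show (⨆ a : A, Qstar x0 a) = 1
          rw [show (⨆ a : A, Qstar x0 a) = ⨆ _ : A, (1:ℝ) from congrArg iSup h]
          exact ciSup_const
        have h1 : (1:ℝ) ≤ Vb (some x0) := by
          have hq := hQb_sn x0
          rw [if_pos hg] at hq
          calc (1:ℝ) = Qbstar (some x0) none := hq.symm
            _ ≤ ⨆ oa : Option A, Qbstar (some x0) oa := le_ciSup_fin _ _
            _ = Vb (some x0) := rfl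
        have h2 : Vb (some x0) ≤ 1 + γ * M := by
          show (⨆ oa : Option A, Qbstar (some x0) oa) ≤ _
          apply ciSup_le
          intro oa
          rcases oa with _ | a
          · rw [hQb_sn, if_pos hg]
            nlinarith
          · rw [hQb_ss]
            have hb : pexp (P x0 a) (fun x' => Vb (some x')) ≤ 1 + M :=
              pexp_le _ fun x' => by
                have h3 := hup x'
                have h4 := (abs_le.mp (hVs1 x')).2
                linarith
            nlinarith
        rw [hVsx, abs_le]
        have hgm : (0:ℝ) ≤ γ * M := mul_nonneg hγ0 hMnn
        constructor <;> linarith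
      · -- both are ≤ each other + γM
        have hv1 : Vb (some x0) ≤ Vs x0 + γ * M := by
          show (⨆ oa : Option A, Qbstar (some x0) oa) ≤ _
          apply ciSup_le
          intro oa
          rcases oa with _ | a
          · rw [hQb_sn, if_neg hg]
            have := hVs0 x0
            nlinarith
          · rw [hQb_ss]
            have hb : pexp (P x0 a) (fun x' => Vb (some x')) ≤
                pexp (P x0 a) Vs + M := by
              calc pexp (P x0 a) (fun x' => Vb (some x')) ≤
                    pexp (P x0 a) (fun x' => Vs x' + M) := pexp_mono _ fun x' => hup x'
                _ = pexp (P x0 a) Vs + M := pexp_add_const _ _ _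
            have hq : γ * pexp (P x0 a) Vs = Qstar x0 a := by
              rw [hQstar, if_neg hg]
            have hqs : Qstar x0 a ≤ Vs x0 := le_ciSup_fin _ _
            nlinarith
        have hv2 : Vs x0 ≤ Vb (some x0) + γ * M := by
          show (⨆ a : A, Qstar x0 a) ≤ _
          apply ciSup_le
          intro a
          rw [hQstar, if_neg hg]
          have hb : pexp (P x0 a) Vs ≤ pexp (P x0 a) (fun x' => Vb (some x')) + M := by
            calc pexp (P x0 a) Vs ≤ pexp (P x0 a) (fun x' => Vb (some x') + M) :=
                  pexp_mono _ fun x' => hlo x'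
              _ = _ := pexp_add_const _ _ _
          have hq : γ * pexp (P x0 a) (fun x' => Vb (some x')) = Qbstar (some x0) (some a) :=
            (hQb_ss x0 a).symm
          have hqs : Qbstar (some x0) (some a) ≤ Vb (some x0) := le_ciSup_fin _ _
          nlinarith
        rw [abs_le]
        constructor <;> linarith
    have hM0 : M = 0 := le_antisymm (by nlinarith) hMnn
    intro x
    have := hMb x
    rw [hM0] at this
    have := abs_nonpos_iff.mp this
    linarith
  -- Fact B : Vξ (some x) ≤ Vr x
  have factB : ∀ x, Vξ (some x) ≤ Vr x := by
    obtain ⟨x0, _, hx0⟩ := Finset.univ.exists_max_image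
      (fun x : X => Vξ (some x) - Vr x) Finset.univ_nonempty
    set M := Vξ (some x0) - Vr x0 with hM
    have hMb : ∀ x, Vξ (some x) - Vr x ≤ M := fun x => hx0 x (Finset.mem_univ _)
    set K := max 0 M with hK
    have hKnn : 0 ≤ K := le_max_left _ _
    have hKb : ∀ x, Vξ (some x) ≤ Vr x + K := fun x =>
      by have := (hMb x).trans (le_max_right 0 M); linarith
    have key : M ≤ γ * K := by
      by_cases hg : x0 ∈ G
      · -- Vr x0 = 1 and Vξ (some x0) ≤ 1
        have hVrx : Vr x0 = 1 := by
          have : (Qr x0) = fun _ => (1:ℝ) := by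
            funext a; rw [hQr, if_pos hg]
          show pexp (ξr x0) (Qr x0) = 1
          rw [show pexp (ξr x0) (Qr x0) = pexp (ξr x0) (fun _ => (1:ℝ)) from
            congrArg _ this, pexp_const]
        have hVle : Vξ (some x0) ≤ 1 :=
          pexp_le _ fun oa => le_of_abs_le (hQξ1 (some x0) oa)
        have : M ≤ 0 := by rw [hM, hVrx]; linarith
        nlinarith
      · -- weighted-sum comparison
        have hVξx : Vξ (some x0) =
            ∑ a, (ξ (some x0) (some a)).toReal *
              (γ * pexp (P x0 a) (fun x' => Vξ (some x'))) := by
          show pexp (ξ (some x0)) (Qξ (some x0)) = _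
          rw [pexp_eq_sum, Fintype.sum_option, hQξ_sn, if_neg hg]
          simp only [mul_zero, zero_add]
          exact Finset.sum_congr rfl fun a _ => by rw [hQξ_ss]
        have hVrx : Vr x0 =
            ∑ a, (ξr x0 a).toReal * (γ * pexp (P x0 a) Vr) := by
          show pexp (ξr x0) (Qr x0) = _
          rw [pexp_eq_sum]
          exact Finset.sum_congr rfl fun a _ => by rw [hQr, if_neg hg]
        have hwsum : ∑ a, (ξ (some x0) (some a)).toReal ≤ 1 := by
          have h1 := pmf_sum_toReal (ξ (some x0))
          rw [Fintype.sum_option] at h1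
          have h2 : (0:ℝ) ≤ (ξ (some x0) none).toReal := ENNReal.toReal_nonneg
          linarith
        have hwle : ∀ a, (ξ (some x0) (some a)).toReal ≤ (ξr x0 a).toReal := fun a =>
          ENNReal.toReal_mono (PMF.apply_ne_top (ξr x0) a)
            (by rw [hres]; exact le_self_add)
        have hE0 : ∀ a, 0 ≤ pexp (P x0 a) Vr := fun a => le_pexp _ fun x' => hVr0 x'
        have step1 : Vξ (some x0) ≤
            ∑ a, (ξ (some x0) (some a)).toReal * (γ * (pexp (P x0 a) Vr + K)) := by
          rw [hVξx]
          refine Finset.sum_le_sum fun a _ => ?_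
          refine mul_le_mul_of_nonneg_left ?_ ENNReal.toReal_nonneg
          refine mul_le_mul_of_nonneg_left ?_ hγ0
          calc pexp (P x0 a) (fun x' => Vξ (some x')) ≤
                pexp (P x0 a) (fun x' => Vr x' + K) := pexp_mono _ fun x' => hKb x'
            _ = pexp (P x0 a) Vr + K := pexp_add_const _ _ _
        have step2 : ∑ a, (ξ (some x0) (some a)).toReal * (γ * (pexp (P x0 a) Vr + K)) =
            γ * (∑ a, (ξ (some x0) (some a)).toReal * pexp (P x0 a) Vr) +
            γ * K * (∑ a, (ξ (some x0) (some a)).toReal) := by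
          rw [Finset.mul_sum, Finset.mul_sum, ← Finset.sum_add_distrib]
          exact Finset.sum_congr rfl fun a _ => by ring
        have step3 : ∑ a, (ξ (some x0) (some a)).toReal * pexp (P x0 a) Vr ≤
            ∑ a, (ξr x0 a).toReal * pexp (P x0 a) Vr :=
          Finset.sum_le_sum fun a _ => mul_le_mul_of_nonneg_right (hwle a) (hE0 a)
        have step4 : γ * (∑ a, (ξr x0 a).toReal * pexp (P x0 a) Vr) = Vr x0 := by
          rw [hVrx, Finset.mul_sum]
          exact Finset.sum_congr rfl fun a _ => by ring
        have : Vξ (some x0) ≤ Vr x0 + γ * K := by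
          have h5 : γ * K * (∑ a, (ξ (some x0) (some a)).toReal) ≤ γ * K :=
            by nlinarith [mul_nonneg hγ0 hKnn]
          calc Vξ (some x0) ≤ _ := step1
            _ = _ := step2
            _ ≤ γ * (∑ a, (ξr x0 a).toReal * pexp (P x0 a) Vr) + γ * K := by
                have := mul_le_mul_of_nonneg_left step3 hγ0
                linarith
            _ = Vr x0 + γ * K := by rw [step4]
        linarith [this]
    have hM0 : M ≤ 0 := shrink_nonpos hγ1 (by rwa [← hK])
    intro x
    have := (hMb x).trans hM0
    linarith
  -- assemble
  rw [pexp_map_some, pexp_map_some]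
  have h1 : pexp d0 (fun x => Vb (some x)) = pexp d0 Vs :=
    congrArg _ (funext fun x => factA x)
  have h2 : pexp d0 (fun x => Vξ (some x)) ≤ pexp d0 Vr :=
    pexp_mono _ fun x => factB x
  linarith
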